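/- Let n be an odd integer with n > 1. Then there is no positive integer m with f(m) = n and d(m) = 4n. -/

import Mathlib

/-- The Carmichael function: the exponent of the multiplicative group mod `m`. -/
noncomputable def carmichael (m : ℕ) : ℕ := Monoid.exponent (ZMod m)ˣ

/-- The radical of `m`: the product of the distinct primes dividing `m`. -/
def radN (m : ℕ) : ℕ := ∏ p ∈ m.primeFactors, p

/-- `δ(m) = 2` if `4 ∣ m`, else `1`. -/
def deltaN (m : ℕ) : ℕ := if 4 ∣ m then 2 else 1

/-- `d(m) = gcd(m, δ(m)·φ(rad m))`. -/
def dFun (m : ℕ) : ℕ := Nat.gcd m (deltaN m * Nat.totient (radN m))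

/-- `f(m) = gcd(m, δ(m)·λ(m)·φ(rad m)/φ(m))`. -/
noncomputable def fFun (m : ℕ) : ℕ :=
  Nat.gcd m (deltaN m * carmichael m * Nat.totient (radN m) / Nat.totient m)

lemma radN_dvd (v : ℕ) : radN v ∣ v := Nat.prod_primeFactors_dvd v

lemma radN_pos (v : ℕ) : 0 < radN v :=
  Finset.prod_pos fun p hp => (Nat.prime_of_mem_primeFactors hp).pos

lemma radN_primeFactors (v : ℕ) : (radN v).primeFactors = v.primeFactors :=
  Nat.primeFactors_prod fun _ hp => Nat.prime_of_mem_primeFactors hp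

lemma totient_radN (v : ℕ) : Nat.totient (radN v) = ∏ p ∈ v.primeFactors, (p - 1) := by
  have h := Nat.totient_mul_prod_primeFactors (radN v)
  rw [radN_primeFactors] at h
  have h2 : (Nat.totient (radN v)) * radN v = radN v * ∏ p ∈ v.primeFactors, (p - 1) := h
  rw [mul_comm] at h2
  exact Nat.eq_of_mul_eq_mul_left (radN_pos v) h2

lemma pow_dvd_of_pow_cong_one {p c j : ℕ} (hp : p.Prime) (hpo : Odd p) (hj : 0 < j)
    (h : p ^ c ∣ (1 + p) ^ j - 1) : p ^ (c - 1) ∣ j := by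
  rcases Nat.eq_zero_or_pos c with rfl | hc
  · simpa using Nat.one_dvd j
  have hx : ¬ p ∣ 1 + p := by
    intro hd
    rw [add_comm] at hd
    have h1 : p = 1 := Nat.dvd_one.mp ((Nat.dvd_add_right (dvd_refl p)).mp hd)
    have := hp.two_le
    omega
  have hlte := Nat.emultiplicity_pow_sub_pow hp hpo (x := 1 + p) (y := 1)
    (by simpa using dvd_refl p) hx j
  simp only [one_pow, Nat.add_sub_cancel_left] at hlte
  -- hlte : emultiplicity p ((1+p)^j - 1) = emultiplicity p p + emultiplicity p j
  rw [hp.emultiplicity_self] at hlte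
  have hfin : FiniteMultiplicity p j := Nat.finiteMultiplicity_iff.2 ⟨hp.ne_one, hj⟩
  have hle : (c : ℕ∞) ≤ emultiplicity p ((1 + p) ^ j - 1) :=
    le_emultiplicity_of_pow_dvd h
  rw [hlte, hfin.emultiplicity_eq_multiplicity] at hle
  have hle2 : c ≤ 1 + multiplicity p j := by exact_mod_cast hle
  exact hfin.pow_dvd_iff_le_multiplicity.mpr (by omega)

lemma pow_dvd_carmichael {m p c : ℕ} (hm : m ≠ 0) (hp : p.Prime) (hpo : Odd p)
    (hdvd : p ^ c ∣ m) : p ^ (c - 1) ∣ carmichael m := by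
  haveI : NeZero m := ⟨hm⟩
  haveI : NeZero (p ^ c) := ⟨pow_ne_zero _ hp.ne_zero⟩
  have h1 : carmichael (p ^ c) ∣ carmichael m :=
    MonoidHom.exponent_dvd (ZMod.unitsMap_surjective hdvd)
  refine dvd_trans ?_ h1
  -- produce element (1+p) of order divisible by p^(c-1)
  have hcop : Nat.Coprime (1 + p) (p ^ c) := by
    apply Nat.Coprime.pow_right
    rw [Nat.coprime_comm]
    show Nat.gcd p (1 + p) = 1
    rw [Nat.gcd_add_self_right, Nat.gcd_one_right]
  set x : (ZMod (p ^ c))ˣ := ZMod.unitOfCoprime (1 + p) hcop with hxdef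
  have hj : 0 < orderOf x := orderOf_pos x
  have hx1 : (((1 + p : ℕ) : ZMod (p ^ c))) ^ (orderOf x) = 1 := by
    have := pow_orderOf_eq_one x
    have := congrArg (Units.val) this
    rw [Units.val_pow_eq_pow_val] at this
    simpa [hxdef, ZMod.coe_unitOfCoprime] using this
  have hmod : (1 + p) ^ (orderOf x) ≡ 1 [MOD p ^ c] := by
    have : (((1 + p) ^ (orderOf x) : ℕ) : ZMod (p ^ c)) = ((1 : ℕ) : ZMod (p ^ c)) := by
      push_cast
      simpa using hx1
    exact (ZMod.natCast_eq_natCast_iff _ _ _).mp this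
  have hdvd2 : p ^ c ∣ (1 + p) ^ (orderOf x) - 1 :=
    (Nat.modEq_iff_dvd' (Nat.one_le_pow _ _ (by omega))).mp hmod.symm
  exact dvd_trans (pow_dvd_of_pow_cong_one hp hpo hj hdvd2) (Monoid.order_dvd_exponent x)

lemma two_dvd_carmichael {m : ℕ} (hm : 2 < m) : 2 ∣ carmichael m := by
  haveI : NeZero m := ⟨by omega⟩
  haveI : Fact (2 < m) := ⟨hm⟩
  have hne : (-1 : (ZMod m)ˣ) ≠ 1 := by
    intro h
    apply ZMod.neg_one_ne_one (n := m)
    have := congrArg (Units.val) h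
    simpa using this
  have hord : orderOf (-1 : (ZMod m)ˣ) = 2 := by
    apply orderOf_eq_prime
    · simp
    · exact hne
  calc (2 : ℕ) = orderOf (-1 : (ZMod m)ˣ) := hord.symm
    _ ∣ Monoid.exponent (ZMod m)ˣ := Monoid.order_dvd_exponent _

theorem no_pair_n_four_n (n : ℕ) (hodd : Odd n) (hn : 1 < n) :
    ¬ ∃ m : ℕ, 0 < m ∧ fFun m = n ∧ dFun m = 4 * n := by
  rintro ⟨m, hm0, hf, hd⟩
  have hmne : m ≠ 0 := hm0.ne'
  have hdm : 4 * n ∣ m := hd ▸ Nat.gcd_dvd_left _ _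
  have h4m : 4 ∣ m := dvd_trans ⟨n, rfl⟩ hdm
  have hnm : n ∣ m := dvd_trans ⟨4, mul_comm 4 n⟩ hdm
  have hδ : deltaN m = 2 := if_pos h4m
  have hd' : Nat.gcd m (2 * Nat.totient (radN m)) = 4 * n := by
    rw [← hδ]; exact hd
  by_cases h8 : 8 ∣ m
  · -- case 8 ∣ m : contradiction from dFun alone
    set e := Nat.totient (radN m) with he_def
    have he : e = ∏ p ∈ m.primeFactors, (p - 1) := totient_radN m
    have h2P : 2 ∈ m.primeFactors :=
      Nat.mem_primeFactors.mpr ⟨Nat.prime_two, dvd_trans ⟨2, rfl⟩ h4m, hmne⟩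
    have he2 : e = ∏ p ∈ m.primeFactors.erase 2, (p - 1) := by
      rw [he, ← Finset.mul_prod_erase _ _ h2P]
      norm_num
    have h2e : 2 ∣ e := by
      have h4 : (4:ℕ) ∣ Nat.gcd m (2 * e) := by rw [hd']; exact ⟨n, rfl⟩
      have h4' : (4:ℕ) ∣ 2 * e := dvd_trans h4 (Nat.gcd_dvd_right _ _)
      omega
    set Q := m.primeFactors.erase 2 with hQ
    have hQodd : ∀ q ∈ Q, 2 ∣ q - 1 := by
      intro q hq
      have hqp : q.Prime := Nat.prime_of_mem_primeFactors (Finset.mem_of_mem_erase hq)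
      have hq2 : q ≠ 2 := Finset.ne_of_mem_erase hq
      have := hqp.two_le
      obtain ⟨t, ht⟩ := hqp.odd_of_ne_two hq2
      omega
    have hQne : Q.Nonempty := by
      rcases Finset.eq_empty_or_nonempty Q with hQe | h
      · rw [hQe, Finset.prod_empty] at he2; omega
      · exact h
    have hcard : Q.card ≤ 1 := by
      by_contra hc
      have h1c : 1 < Q.card := by omega
      obtain ⟨a, ha, b, hb, hab⟩ := Finset.one_lt_card.mp h1c
      have hsub : ({a, b} : Finset ℕ) ⊆ Q := by
        intro x hx
        simp only [Finset.mem_insert, Finset.mem_singleton] at hx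
        rcases hx with rfl | rfl <;> assumption
      have hdvd4 : 4 ∣ e := by
        rw [he2]
        have h1 : ∏ p ∈ ({a, b} : Finset ℕ), (p - 1) ∣ ∏ p ∈ Q, (p - 1) :=
          Finset.prod_dvd_prod_of_subset _ _ _ hsub
        rw [Finset.prod_pair hab] at h1
        obtain ⟨s, hs⟩ := hQodd a ha
        obtain ⟨t, ht⟩ := hQodd b hb
        refine dvd_trans ⟨s * t, ?_⟩ h1
        rw [hs, ht]; ring
      have h8d : 8 ∣ Nat.gcd m (2 * e) := Nat.dvd_gcd h8 (by omega)
      rw [hd'] at h8d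
      obtain ⟨t, ht⟩ := hodd
      omega
    obtain ⟨p, hp⟩ := Finset.card_eq_one.mp (le_antisymm hcard hQne.card_pos)
    have hpP : p ∈ m.primeFactors := Finset.mem_of_mem_erase (hp ▸ Finset.mem_singleton_self p)
    have hpprime : p.Prime := Nat.prime_of_mem_primeFactors hpP
    have hep : e = p - 1 := by rw [he2, hp, Finset.prod_singleton]
    have hne2 : n ∣ 2 * e := dvd_trans ⟨4, by ring⟩ (hd' ▸ Nat.gcd_dvd_right m _)
    have hncop2 : Nat.Coprime 2 n := by
      exact Nat.coprime_two_left.mpr hodd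
    rw [hep] at hne2
    have hnp1 : n ∣ p - 1 := (Nat.Coprime.dvd_of_dvd_mul_left (hncop2.symm) hne2)
    -- a prime factor of n must be p
    have hq := Nat.minFac_dvd n
    have hqprime : (n.minFac).Prime := Nat.minFac_prime (by omega)
    have hqm : n.minFac ∈ m.primeFactors :=
      Nat.mem_primeFactors.mpr ⟨hqprime, dvd_trans hq hnm, hmne⟩
    have hq2 : n.minFac ≠ 2 := by
      intro h
      obtain ⟨t, ht⟩ := hodd
      have : (2 : ℕ) ∣ n := h ▸ hq
      omega
    have hqQ : n.minFac ∈ Q := Finset.mem_erase.mpr ⟨hq2, hqm⟩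
    have hqp : n.minFac = p := by rwa [hp, Finset.mem_singleton] at hqQ
    have hpn : p ∣ n := hqp ▸ hq
    have hpp1 : p ∣ p - 1 := dvd_trans hpn hnp1
    have := hpprime.two_le
    have := Nat.le_of_dvd (by omega) hpp1
    omega
  · -- case ¬ 8 ∣ m : m = 4 * u with u odd, contradiction from fFun
    obtain ⟨u, hu⟩ := h4m
    have hu0 : u ≠ 0 := by omega
    have h2u : ¬ 2 ∣ u := by intro ⟨t, ht⟩; exact h8 ⟨t, by omega⟩
    have huodd : Odd u := Nat.odd_iff.mpr (by omega)
    have hPF : m.primeFactors = insert 2 u.primeFactors := by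
      rw [hu, Nat.primeFactors_mul (by norm_num) hu0]
      have h4pf : Nat.primeFactors 4 = {2} := by
        rw [show (4:ℕ) = 2 ^ 2 by norm_num, Nat.primeFactors_prime_pow (by norm_num) Nat.prime_two]
      rw [h4pf]
      rfl
    have h2uPF : 2 ∉ u.primeFactors := fun h => h2u (Nat.dvd_of_mem_primeFactors h)
    have hradm : radN m = 2 * radN u := by
      rw [radN, hPF, Finset.prod_insert h2uPF]; rfl
    have hradu_odd : ¬ 2 ∣ radN u := by
      intro h
      have : 2 ∈ (radN u).primeFactors :=
        Nat.mem_primeFactors.mpr ⟨Nat.prime_two, h, (radN_pos u).ne'⟩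
      rw [radN_primeFactors] at this
      exact h2uPF this
    have hcop2radu : Nat.Coprime 2 (radN u) :=
      (Nat.prime_two.coprime_iff_not_dvd).mpr hradu_odd
    have he : Nat.totient (radN m) = Nat.totient (radN u) := by
      rw [hradm, Nat.totient_mul hcop2radu, Nat.totient_two, one_mul]
    obtain ⟨k, hk⟩ := radN_dvd u
    have hku : k ∣ u := ⟨radN u, hk.trans (mul_comm _ _)⟩
    have hφu : Nat.totient u = k * Nat.totient (radN u) := by
      have h := Nat.totient_mul_prod_primeFactors u
      have h2 : Nat.totient u * radN u = u * Nat.totient (radN u) := by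
        rw [totient_radN u]; exact h
      apply Nat.eq_of_mul_eq_mul_left (radN_pos u)
      have h3 : radN u * (k * Nat.totient (radN u)) = u * Nat.totient (radN u) := by
        rw [← mul_assoc, ← hk]
      rw [h3, ← h2]
      exact mul_comm _ _
    have hcop4u : Nat.Coprime 4 u := by
      rw [show (4:ℕ) = 2 ^ 2 by norm_num]
      exact Nat.Coprime.pow_left 2 (Nat.coprime_two_left.mpr huodd)
    have hφm : Nat.totient m = 2 * (k * Nat.totient (radN u)) := by
      rw [hu, Nat.totient_mul hcop4u, hφu, show Nat.totient 4 = 2 by decide]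
    -- carmichael divisibilities
    have hlam2 : 2 ∣ carmichael m := two_dvd_carmichael (by omega)
    have hlamk : k ∣ carmichael m := by
      rw [Nat.dvd_iff_prime_pow_dvd_dvd]
      intro q i hq hqk
      rcases Nat.eq_zero_or_pos i with rfl | hi
      · simpa using Nat.one_dvd _
      have hqprime : q.Prime := hq
      have hqku : q ∣ k := dvd_trans (dvd_pow_self q hi.ne') hqk
      have hqu : q ∣ u := dvd_trans hqku hku
      have hqodd : Odd q := hqprime.odd_of_ne_two (by rintro rfl; exact h2u hqu)
      have hqrad : q ∣ radN u := Finset.dvd_prod_of_mem _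
        (Nat.mem_primeFactors.mpr ⟨hqprime, hqu, hu0⟩)
      have hqi1 : q ^ (i + 1) ∣ m := by
        have h1 : q ^ i * q ∣ k * radN u := mul_dvd_mul hqk hqrad
        have h2 : k * radN u ∣ m := ⟨4, by rw [hu]; nth_rewrite 1 [hk]; ring⟩
        rw [pow_succ]
        exact dvd_trans h1 h2
      have := pow_dvd_carmichael hmne hqprime hqodd hqi1
      simpa using this
    have hkodd : ¬ 2 ∣ k := fun h => h2u (dvd_trans h hku)
    have hlam2k : 2 * k ∣ carmichael m := by
      refine Nat.Coprime.mul_dvd_of_dvd_of_dvd ?_ hlam2 hlamk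
      exact (Nat.prime_two.coprime_iff_not_dvd).mpr hkodd
    obtain ⟨w, hw⟩ := hlam2k
    have hφpos : 0 < Nat.totient m := Nat.totient_pos.mpr hm0
    have hX : deltaN m * carmichael m * Nat.totient (radN m) / Nat.totient m = 2 * w := by
      rw [hδ, hw, he, hφm]
      have : 2 * (2 * k * w) * Nat.totient (radN u)
          = (2 * (k * Nat.totient (radN u))) * (2 * w) := by ring
      rw [this]
      apply Nat.mul_div_cancel_left
      rw [← hφm]; exact hφpos
    have h2n : 2 ∣ n := by
      rw [← hf, fFun, hX]
      exact Nat.dvd_gcd ⟨2 * u, by rw [hu]; ring⟩ ⟨w, rfl⟩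
    obtain ⟨t, ht⟩ := hodd
    omega
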